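/- Let H be the connected graph on n vertices that is the union of the complete graph K_m on vertices v_{α_1},…,v_{α_m} (1 ≤ α_1 < α_2 < … < α_m = n, m < n) and m star graphs, one centered at each vertex v_{α_i} of K_m, each star having at least one leaf, the stars being pairwise vertex-disjoint and meeting K_m only in their centers, with the leaves of the stars being exactly the n − m vertices outside K_m. Then the ideal of vertex covers I_c(H) has exactly m + 1 minimal monomial squarefree generators, namely: the monomial X_{α_1}X_{α_2}⋯X_{α_m} (the product over all K_m-vertices), together with, for each i = 1,…,m, the monomial (∏_{l≠i} X_{α_l})·(∏_{w a leaf of the star centered at v_{α_i}} X_w). -/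

import Mathlib

open MvPolynomial Finset

/-- A set of vertices is a vertex cover if it meets every edge. -/
def IsVertexCover {V : Type*} (G : SimpleGraph V) (C : Set V) : Prop :=
  ∀ ⦃u v : V⦄, G.Adj u v → u ∈ C ∨ v ∈ C

/-- The ideal of vertex covers of a graph on `Fin n`. -/
noncomputable def coverIdeal (K : Type*) [Field K] {n : ℕ} (G : SimpleGraph (Fin n)) :
    Ideal (MvPolynomial (Fin n) K) :=
  Ideal.span { p | ∃ C : Finset (Fin n), IsVertexCover G ↑C ∧ p = ∏ i ∈ C, X i }

/-- The edge ideal of a graph on `Fin n`. -/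
noncomputable def edgeIdeal (K : Type*) [Field K] {n : ℕ} (G : SimpleGraph (Fin n)) :
    Ideal (MvPolynomial (Fin n) K) :=
  Ideal.span { p | ∃ u v : Fin n, G.Adj u v ∧ p = X u * X v }

/-- `p` is a minimal monomial generator of the monomial ideal `I`:
it is a monomial in `I` none of whose proper monomial divisors lies in `I`. -/
def IsMinimalMonomialGen {K : Type*} [Field K] {n : ℕ}
    (I : Ideal (MvPolynomial (Fin n) K)) (p : MvPolynomial (Fin n) K) : Prop :=
  ∃ a : Fin n →₀ ℕ, p = monomial a (1 : K) ∧ p ∈ I ∧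
    ∀ b : Fin n →₀ ℕ, b ≤ a → b ≠ a → monomial b (1 : K) ∉ I

/-- The maximal graded ideal (X_1, …, X_n) of the polynomial ring. -/
noncomputable def gradedMaxIdeal (K : Type*) [Field K] (n : ℕ) :
    Ideal (MvPolynomial (Fin n) K) :=
  Ideal.span (Set.range X)

/-- The set of lengths of regular sequences on `R/I` consisting of elements of the
maximal graded ideal; its greatest element is the depth of `R/I`. -/
def depthSet (K : Type*) [Field K] {n : ℕ} (I : Ideal (MvPolynomial (Fin n) K)) : Set ℕ :=
  {k | ∃ rs : List (MvPolynomial (Fin n) K), rs.length = k ∧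
    (∀ r ∈ rs, r ∈ gradedMaxIdeal K n) ∧
    RingTheory.Sequence.IsRegular (MvPolynomial (Fin n) K ⧸ I) rs}

/-- A minimal graded free resolution of `R/I`:
`⋯ → F₂ → F₁ → F₀ = R → R/I → 0`, where `F_{j+1}` is free of rank `rk j` with
generator degrees `dgr j`, the map `F₁ → R` is given by the row `g` (whose image is `I`),
and the map `F_{j+2} → F_{j+1}` is given by the matrix `M j`.  All matrix entries are
homogeneous of the appropriate degree and lie in the maximal graded ideal (minimality),
and the complex is exact at every `F_{j}`, `j ≥ 1`. -/
def IsMinimalGradedFreeResolution {K : Type*} [Field K] {n : ℕ}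
    (I : Ideal (MvPolynomial (Fin n) K))
    (rk : ℕ → ℕ) (dgr : ∀ j : ℕ, Fin (rk j) → ℕ)
    (g : Fin (rk 0) → MvPolynomial (Fin n) K)
    (M : ∀ j : ℕ, Matrix (Fin (rk j)) (Fin (rk (j + 1))) (MvPolynomial (Fin n) K)) : Prop :=
  Ideal.span (Set.range g) = I ∧
  (∀ i, (g i).IsHomogeneous (dgr 0 i)) ∧
  (∀ i, constantCoeff (g i) = 0) ∧
  (∀ (j : ℕ) (k : Fin (rk j)) (i : Fin (rk (j + 1))),
      (M j k i).IsHomogeneous (dgr (j + 1) i - dgr j k)) ∧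
  (∀ (j : ℕ) (k : Fin (rk j)) (i : Fin (rk (j + 1))),
      dgr (j + 1) i ≤ dgr j k → M j k i = 0) ∧
  LinearMap.ker (Fintype.linearCombination (MvPolynomial (Fin n) K) g)
    = LinearMap.range (M 0).mulVecLin ∧
  (∀ j : ℕ, LinearMap.ker (M j).mulVecLin = LinearMap.range (M (j + 1)).mulVecLin)

namespace CoverAux

variable {n : ℕ}

noncomputable def ind (C : Finset (Fin n)) : Fin n →₀ ℕ := ∑ i ∈ C, Finsupp.single i 1

lemma ind_apply (C : Finset (Fin n)) (j : Fin n) :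
    ind C j = if j ∈ C then 1 else 0 := by
  classical
  simp [ind, Finsupp.single_apply, Finset.sum_ite_eq' C j (fun _ => 1)]

lemma ind_mono {C D : Finset (Fin n)} (h : C ⊆ D) : ind C ≤ ind D := by
  intro j
  rw [ind_apply, ind_apply]
  by_cases hj : j ∈ C
  · simp [hj, h hj]
  · simp [hj]

lemma ind_injective : Function.Injective (ind (n := n)) := by
  intro C D h
  ext x
  have := congrArg (fun g => g x) h
  simp only [ind_apply] at this
  by_cases hC : x ∈ C <;> by_cases hD : x ∈ D <;> simp_all

lemma one_le_of_ind_le {C : Finset (Fin n)} {b : Fin n →₀ ℕ} (h : ind C ≤ b)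
    {x : Fin n} (hx : x ∈ C) : 1 ≤ b x := by
  have := h x
  rwa [ind_apply, if_pos hx] at this

lemma exists_zero {C : Finset (Fin n)} {b : Fin n →₀ ℕ} (hle : b ≤ ind C)
    (hne : b ≠ ind C) : ∃ x ∈ C, b x = 0 := by
  by_contra hcon
  push_neg at hcon
  apply hne
  ext x
  have h1 := hle x
  rw [ind_apply]
  by_cases hx : x ∈ C
  · rw [if_pos hx]
    rw [ind_apply, if_pos hx] at h1
    have h2 := hcon x hx
    omega
  · rw [if_neg hx]
    rw [ind_apply, if_neg hx] at h1
    omega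

lemma prod_X_eq (K : Type*) [Field K] (C : Finset (Fin n)) :
    ∏ i ∈ C, (X i : MvPolynomial (Fin n) K) = monomial (ind C) 1 := by
  rw [ind, monomial_sum_one]
  rfl

lemma mem_coverIdeal_iff {K : Type*} [Field K] (G : SimpleGraph (Fin n)) (b : Fin n →₀ ℕ) :
    (monomial b (1 : K) ∈ coverIdeal K G) ↔
      ∃ C : Finset (Fin n), IsVertexCover G ↑C ∧ ind C ≤ b := by
  classical
  have hspan : coverIdeal K G = Ideal.span ((fun s => monomial s (1 : K)) ''
      {s | ∃ C : Finset (Fin n), IsVertexCover G ↑C ∧ s = ind C}) := by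
    unfold coverIdeal
    congr 1
    ext p
    constructor
    · rintro ⟨C, hC, rfl⟩
      exact ⟨ind C, ⟨C, hC, rfl⟩, (prod_X_eq K C).symm⟩
    · rintro ⟨s, ⟨C, hC, rfl⟩, rfl⟩
      exact ⟨C, hC, (prod_X_eq K C).symm⟩
  rw [hspan, mem_ideal_span_monomial_image]
  rw [support_monomial, if_neg (one_ne_zero : (1:K) ≠ 0)]
  simp only [Finset.mem_singleton, Set.mem_setOf_eq]
  constructor
  · intro h
    obtain ⟨s, ⟨C, hC, rfl⟩, hle⟩ := h b rfl
    exact ⟨C, hC, hle⟩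
  · rintro ⟨C, hC, hle⟩ xi rfl
    exact ⟨ind C, ⟨C, hC, rfl⟩, hle⟩

end CoverAux

open CoverAux

attribute [local instance] Classical.propDecidable

/-- `H` is the union of the complete graph on the vertices `α 0 < α 1 < … < α (m-1)`
(with `α (m-1) = n-1` and `m < n`) and `m` stars, one centered at each vertex `α i`, each
with at least one leaf, whose leaves are exactly the `n - m` vertices outside the complete
graph (the outside vertex `v` being joined precisely to its center `f v`).  Then `I_c(H)`
has exactly `m + 1` minimal monomial squarefree generators, namely `∏_i X (α i)` together
with, for each `i`, the monomial `(∏_{l ≠ i} X (α l)) * ∏_{w leaf at α i} X w`. -/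
theorem coverIdeal_gens_all_stars
    (n m : ℕ) (hm : 0 < m) (hmn : m < n) (K : Type*) [Field K]
    (α : Fin m → Fin n) (hα : StrictMono α)
    (hlast : (α ⟨m - 1, by omega⟩ : ℕ) = n - 1)
    (f : Fin n → Fin n)
    (hf : ∀ v : Fin n, v ∉ Set.range α → ∃ i : Fin m, f v = α i)
    (hstar : ∀ i : Fin m, ∃ v : Fin n, v ∉ Set.range α ∧ f v = α i)
    (H : SimpleGraph (Fin n))
    (hH : ∀ u v : Fin n, H.Adj u v ↔
      (∃ i j : Fin m, i ≠ j ∧ u = α i ∧ v = α j) ∨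
      (u ∉ Set.range α ∧ v = f u) ∨ (v ∉ Set.range α ∧ u = f v)) :
    ∃ S : Finset (MvPolynomial (Fin n) K),
      S = insert (∏ i : Fin m, X (α i))
          (Finset.univ.image fun i : Fin m =>
            (∏ l ∈ Finset.univ.erase i, X (α l)) *
              ∏ w ∈ Finset.univ.filter (fun w : Fin n => w ∉ Set.range α ∧ f w = α i), X w) ∧
      {p | IsMinimalMonomialGen (coverIdeal K H) p} = ↑S ∧
      S.card = m + 1 := by
  have hαinj : Function.Injective α := hα.injective
  set A : Finset (Fin n) := Finset.univ.image α with hA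
  set Cv : Fin m → Finset (Fin n) := fun i =>
    A.erase (α i) ∪ Finset.univ.filter (fun w : Fin n => w ∉ Set.range α ∧ f w = α i) with hCv
  have hαA : ∀ i, α i ∈ A := fun i => Finset.mem_image.2 ⟨i, Finset.mem_univ i, rfl⟩
  have hαnotCv : ∀ i, α i ∉ Cv i := by
    intro i h
    rcases Finset.mem_union.1 h with h | h
    · exact (Finset.mem_erase.1 h).1 rfl
    · exact ((Finset.mem_filter.1 h).2).1 ⟨i, rfl⟩
  have hαinCv : ∀ i j : Fin m, i ≠ j → α i ∈ Cv j := fun i j hij =>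
    Finset.mem_union_left _ (Finset.mem_erase.2 ⟨fun h => hij (hαinj h), hαA i⟩)
  have hadjαα : ∀ i j : Fin m, i ≠ j → H.Adj (α i) (α j) := fun i j hij =>
    (hH _ _).2 (Or.inl ⟨i, j, hij, rfl, rfl⟩)
  have hadjL : ∀ (i : Fin m) (w : Fin n),
      w ∈ Finset.univ.filter (fun w : Fin n => w ∉ Set.range α ∧ f w = α i) →
      H.Adj w (α i) := by
    intro i w hw
    obtain ⟨-, hw1, hw2⟩ := Finset.mem_filter.1 hw
    exact (hH _ _).2 (Or.inr (Or.inl ⟨hw1, hw2.symm⟩))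
  -- A and Cv i are vertex covers
  have covA : IsVertexCover H ↑A := by
    intro u v huv
    rw [hH] at huv
    rcases huv with ⟨i, j, hij, rfl, rfl⟩ | ⟨hu, rfl⟩ | ⟨hv, rfl⟩
    · exact Or.inl (hαA i)
    · obtain ⟨i, hi⟩ := hf u hu
      exact Or.inr (by rw [hi]; exact hαA i)
    · obtain ⟨i, hi⟩ := hf v hv
      exact Or.inl (by rw [hi]; exact hαA i)
  have covCv : ∀ i, IsVertexCover H ↑(Cv i) := by
    intro i u v huv
    rw [hH] at huv
    rcases huv with ⟨i', j', hij, rfl, rfl⟩ | ⟨hu, rfl⟩ | ⟨hv, rfl⟩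
    · by_cases h : i' = i
      · subst h
        exact Or.inr (hαinCv j' i' (fun he => hij he.symm))
      · exact Or.inl (hαinCv i' i h)
    · obtain ⟨j, hj⟩ := hf u hu
      by_cases h : j = i
      · subst h
        exact Or.inl (Finset.mem_union_right _ (Finset.mem_filter.2 ⟨Finset.mem_univ u, hu, hj⟩))
      · refine Or.inr ?_
        rw [hj]
        exact hαinCv j i h
    · obtain ⟨j, hj⟩ := hf v hv
      by_cases h : j = i
      · subst h
        exact Or.inr (Finset.mem_union_right _ (Finset.mem_filter.2 ⟨Finset.mem_univ v, hv, hj⟩))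
      · refine Or.inl ?_
        rw [hj]
        exact hαinCv j i h
  have memI : ∀ b : Fin n →₀ ℕ, (monomial b (1:K) ∈ coverIdeal K H) ↔
      ∃ C : Finset (Fin n), IsVertexCover H ↑C ∧ ind C ≤ b :=
    fun b => mem_coverIdeal_iff H b
  -- every cover contains A or some Cv i
  have upward : ∀ C : Finset (Fin n), IsVertexCover H ↑C → A ⊆ C ∨ ∃ i, Cv i ⊆ C := by
    intro C hC
    by_cases hall : ∀ i : Fin m, α i ∈ C
    · left
      intro x hx
      obtain ⟨i, -, rfl⟩ := Finset.mem_image.1 hx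
      exact hall i
    · push_neg at hall
      obtain ⟨i, hi⟩ := hall
      right
      refine ⟨i, fun x hx => ?_⟩
      rcases Finset.mem_union.1 hx with hx | hx
      · obtain ⟨hne, hxA⟩ := Finset.mem_erase.1 hx
        obtain ⟨j, -, rfl⟩ := Finset.mem_image.1 hxA
        have hji : j ≠ i := fun h => hne (by rw [h])
        rcases hC (hadjαα j i hji) with h | h
        · exact h
        · exact absurd h hi
      · rcases hC (hadjL i x hx) with h | h
        · exact h
        · exact absurd h hi
  -- minimality
  have minA : ∀ b : Fin n →₀ ℕ, b ≤ ind A → b ≠ ind A → monomial b (1:K) ∉ coverIdeal K H := by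
    intro b hle hne hmem
    obtain ⟨C, hC, hCb⟩ := (memI b).1 hmem
    obtain ⟨x, hxA, hbx⟩ := exists_zero hle hne
    obtain ⟨i, -, rfl⟩ := Finset.mem_image.1 hxA
    obtain ⟨w, hw, hfw⟩ := hstar i
    have hadj : H.Adj w (α i) := (hH _ _).2 (Or.inr (Or.inl ⟨hw, hfw.symm⟩))
    rcases hC hadj with h | h
    · have h1 := one_le_of_ind_le hCb (Finset.mem_coe.1 h)
      have hwA : w ∉ A := fun hmem' => by
        obtain ⟨j, -, hj⟩ := Finset.mem_image.1 hmem'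
        exact hw ⟨j, hj⟩
      have h2 := hle w
      rw [ind_apply, if_neg hwA] at h2
      omega
    · have h1 := one_le_of_ind_le hCb (Finset.mem_coe.1 h)
      omega
  have minCv : ∀ (i : Fin m) (b : Fin n →₀ ℕ), b ≤ ind (Cv i) → b ≠ ind (Cv i) →
      monomial b (1:K) ∉ coverIdeal K H := by
    intro i b hle hne hmem
    obtain ⟨C, hC, hCb⟩ := (memI b).1 hmem
    obtain ⟨x, hxCv, hbx⟩ := exists_zero hle hne
    have hαi0 : b (α i) = 0 := by
      have := hle (α i)
      rw [ind_apply, if_neg (hαnotCv i)] at this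
      omega
    have hαiC : α i ∉ C := fun h => by
      have := one_le_of_ind_le hCb h
      omega
    rcases Finset.mem_union.1 hxCv with hx | hx
    · obtain ⟨hne', hxA⟩ := Finset.mem_erase.1 hx
      obtain ⟨j, -, rfl⟩ := Finset.mem_image.1 hxA
      have hji : i ≠ j := fun h => hne' (by rw [h])
      rcases hC (hadjαα i j hji) with h | h
      · exact hαiC (Finset.mem_coe.1 h)
      · have := one_le_of_ind_le hCb (Finset.mem_coe.1 h)
        omega
    · rcases hC (hadjL i x hx) with h | h
      · have := one_le_of_ind_le hCb (Finset.mem_coe.1 h)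
        omega
      · exact hαiC (Finset.mem_coe.1 h)
  -- characterization of minimal monomial generators
  have hchar : ∀ p : MvPolynomial (Fin n) K, IsMinimalMonomialGen (coverIdeal K H) p ↔
      (p = monomial (ind A) 1 ∨ ∃ i, p = monomial (ind (Cv i)) 1) := by
    intro p
    constructor
    · rintro ⟨a, rfl, hmem, hmin⟩
      obtain ⟨C, hC, hCa⟩ := (memI a).1 hmem
      rcases upward C hC with hAC | ⟨i, hiC⟩
      · left
        have h1 : ind A ≤ a := le_trans (ind_mono hAC) hCa
        by_cases h : ind A = a
        · rw [h]
        · exact absurd ((memI _).2 ⟨A, covA, le_rfl⟩) (hmin _ h1 h)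
      · right
        refine ⟨i, ?_⟩
        have h1 : ind (Cv i) ≤ a := le_trans (ind_mono hiC) hCa
        by_cases h : ind (Cv i) = a
        · rw [h]
        · exact absurd ((memI _).2 ⟨Cv i, covCv i, le_rfl⟩) (hmin _ h1 h)
    · rintro (rfl | ⟨i, rfl⟩)
      · exact ⟨ind A, rfl, (memI _).2 ⟨A, covA, le_rfl⟩, fun b hb hne => minA b hb hne⟩
      · exact ⟨ind (Cv i), rfl, (memI _).2 ⟨Cv i, covCv i, le_rfl⟩,
          fun b hb hne => minCv i b hb hne⟩
  -- the product expressions are the corresponding monomials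
  have eA : (∏ i : Fin m, X (α i) : MvPolynomial (Fin n) K) = monomial (ind A) 1 := by
    rw [← prod_X_eq K A, hA, Finset.prod_image (fun x _ y _ h => hαinj h)]
  have eC : ∀ i : Fin m,
      ((∏ l ∈ Finset.univ.erase i, X (α l)) *
        ∏ w ∈ Finset.univ.filter (fun w : Fin n => w ∉ Set.range α ∧ f w = α i), X w
        : MvPolynomial (Fin n) K) = monomial (ind (Cv i)) 1 := by
    intro i
    have himg : (Finset.univ.erase i).image α = A.erase (α i) := by
      ext x
      constructor
      · intro hx
        obtain ⟨j, hj, rfl⟩ := Finset.mem_image.1 hx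
        exact Finset.mem_erase.2 ⟨fun h => (Finset.mem_erase.1 hj).1 (hαinj h), hαA j⟩
      · intro hx
        obtain ⟨hne, hxA⟩ := Finset.mem_erase.1 hx
        obtain ⟨j, -, rfl⟩ := Finset.mem_image.1 hxA
        exact Finset.mem_image.2 ⟨j,
          Finset.mem_erase.2 ⟨fun h => hne (by rw [h]), Finset.mem_univ j⟩, rfl⟩
    have hdisj : Disjoint (A.erase (α i))
        (Finset.univ.filter (fun w : Fin n => w ∉ Set.range α ∧ f w = α i)) := by
      rw [Finset.disjoint_left]
      intro x hx hxL
      obtain ⟨j, -, rfl⟩ := Finset.mem_image.1 (Finset.mem_of_mem_erase hx)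
      exact ((Finset.mem_filter.1 hxL).2).1 ⟨j, rfl⟩
    rw [← prod_X_eq K (Cv i), hCv]
    rw [Finset.prod_union hdisj, ← himg, Finset.prod_image (fun x _ y _ h => hαinj h)]
  refine ⟨_, rfl, ?_, ?_⟩
  · ext p
    rw [Set.mem_setOf_eq, hchar p]
    simp only [Finset.coe_insert, Set.mem_insert_iff, Finset.coe_image, Set.mem_image,
      Set.mem_image, Finset.mem_coe, Finset.mem_univ, Finset.coe_univ, Set.mem_univ,
      true_and, eA, eC]
    tauto
  · have hinjmon : Function.Injective (fun a : Fin n →₀ ℕ => monomial a (1:K)) :=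
      monomial_left_injective one_ne_zero
    have hCvne : ∀ i j : Fin m, i ≠ j → Cv i ≠ Cv j := by
      intro i j hij h
      exact hαnotCv j (h ▸ hαinCv j i (fun he => hij he.symm))
    have hnm : (∏ i : Fin m, X (α i) : MvPolynomial (Fin n) K) ∉
        (Finset.univ.image fun i : Fin m =>
          (∏ l ∈ Finset.univ.erase i, X (α l)) *
            ∏ w ∈ Finset.univ.filter (fun w : Fin n => w ∉ Set.range α ∧ f w = α i), X w) := by
      simp only [Finset.mem_image, Finset.mem_univ, true_and, not_exists, eA, eC]
      intro i h
      have hAC : Cv i = A := ind_injective (hinjmon h)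
      exact hαnotCv i (hAC.symm ▸ hαA i)
    rw [Finset.card_insert_of_notMem hnm, Finset.card_image_of_injOn, Finset.card_univ,
      Fintype.card_fin]
    intro x _ y _ hxy
    simp only [] at hxy
    rw [eC x, eC y] at hxy
    by_contra hne
    exact hCvne x y hne (ind_injective (hinjmon hxy))
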